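/- arXiv:2509.08957 — 2 statements merged into one kernel-verified Lean document; each statement's English description precedes it below -/
import Mathlib

section
/- Let h > 0, ψ₀ > 0, M > 0, and let ψ : (0, M] → [0, ψ₀] be continuous. Suppose y is a solution of y'(r) = (y(r)² − ψ(r))/h on (r₀, M] with y(M) = 0, and suppose y(r₀) < 0 for some r₀ < M. Then a contradiction arises: hence any such solution satisfies y(r) ≥ 0 on its interval of existence in (0, M]. -/
/-- **Nonnegativity for the Riccati equation**: a solution of `y' = (y² − ψ)/h`
on `[r₀, M] ⊆ (0, M]` with `y(M) = 0`, where `0 ≤ ψ ≤ ψ₀`, satisfies `y ≥ 0`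
(a value `y(r₀) < 0` would lead to a contradiction). -/
theorem riccati_nonneg (h ψ₀ M r₀ : ℝ) (hh : 0 < h) (hψ₀ : 0 < ψ₀) (hM : 0 < M)
    (hr₀ : 0 < r₀) (hr₀M : r₀ < M)
    (ψ : ℝ → ℝ) (hψc : ContinuousOn ψ (Set.Ioc 0 M))
    (hψb : ∀ r ∈ Set.Ioc (0 : ℝ) M, ψ r ∈ Set.Icc 0 ψ₀)
    (y : ℝ → ℝ)
    (hy : ∀ r ∈ Set.Icc r₀ M,
      HasDerivWithinAt y ((y r ^ 2 - ψ r) / h) (Set.Icc r₀ M) r)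
    (hyM : y M = 0) :
    ∀ r ∈ Set.Icc r₀ M, 0 ≤ y r := by
  intro a ha
  by_contra hneg
  push_neg at hneg
  have hyc : ContinuousOn y (Set.Icc r₀ M) := fun t ht => (hy t ht).continuousWithinAt
  set S : Set ℝ := Set.Icc a M ∩ y ⁻¹' {0} with hSdef
  have hsub : Set.Icc a M ⊆ Set.Icc r₀ M := Set.Icc_subset_Icc ha.1 le_rfl
  have hMS : M ∈ S := ⟨⟨ha.2, le_rfl⟩, hyM⟩
  have hSne : S.Nonempty := ⟨M, hMS⟩
  have hSbdd : BddBelow S := ⟨a, fun t ht => ht.1.1⟩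
  have hSclosed : IsClosed S :=
    (hyc.mono hsub).preimage_isClosed_of_isClosed isClosed_Icc isClosed_singleton
  set b := sInf S with hbdef
  have hbS : b ∈ S := hSclosed.csInf_mem hSne hSbdd
  have hab : a ≤ b := le_csInf hSne fun t ht => ht.1.1
  have hbM : b ≤ M := hbS.1.2
  have hyb : y b = 0 := hbS.2
  have hab' : a < b := by
    rcases lt_or_eq_of_le hab with h' | h'
    · exact h'
    · exact absurd (h' ▸ hyb) hneg.ne
  -- y < 0 on Ico a b
  have hylt : ∀ t ∈ Set.Ico a b, y t < 0 := by
    intro t ht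
    by_contra hge
    push_neg at hge
    have htM : t ∈ Set.Icc a M := ⟨ht.1, le_trans ht.2.le hbM⟩
    have : ∃ c ∈ Set.Icc a t, y c = 0 := by
      have hcont : ContinuousOn y (Set.Icc a t) :=
        hyc.mono (Set.Icc_subset_Icc ha.1 (hsub htM).2)
      have := intermediate_value_Icc ht.1 hcont
      have h0 : (0:ℝ) ∈ Set.Icc (y a) (y t) := ⟨hneg.le, hge⟩
      obtain ⟨c, hc, hc0⟩ := this h0
      exact ⟨c, hc, hc0⟩
    obtain ⟨c, hc, hc0⟩ := this
    have hcS : c ∈ S := ⟨⟨hc.1, le_trans hc.2 htM.2⟩, hc0⟩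
    have : b ≤ c := csInf_le hSbdd hcS
    exact absurd (lt_of_le_of_lt (this.trans hc.2) ht.2) (lt_irrefl b)
  -- monotonicity of G = 1/y + r/h on Icc a c for c < b
  have key : ∀ c ∈ Set.Ico a b, (y a)⁻¹ + a / h ≤ (y c)⁻¹ + c / h := by
    intro c hc
    have hIcc : Set.Icc a c ⊆ Set.Ico a b :=
      fun t ht => ⟨ht.1, lt_of_le_of_lt ht.2 hc.2⟩
    have hIccM : Set.Icc a c ⊆ Set.Icc r₀ M := fun t ht =>
      hsub ⟨ht.1, le_trans (hIcc ht).2.le hbM⟩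
    have hmono : MonotoneOn (fun r => (y r)⁻¹ + r / h) (Set.Icc a c) := by
      apply monotoneOn_of_hasDerivWithinAt_nonneg (f' := fun r =>
          -((y r ^ 2 - ψ r) / h) / (y r) ^ 2 + 1 / h) (convex_Icc a c)
      · intro t ht
        have hne : y t ≠ 0 := (hylt t (hIcc ht)).ne
        exact ((hyc.mono hIccM) t ht).inv₀ hne |>.add
          (continuousWithinAt_id.div_const h)
      · intro t ht
        rw [interior_Icc] at ht
        have ht' : t ∈ Set.Icc a c := Set.Ioo_subset_Icc_self ht
        have hne : y t ≠ 0 := (hylt t (hIcc ht')).ne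
        have hd := (hy t (hIccM ht')).mono (Set.Subset.trans Set.Ioo_subset_Icc_self hIccM)
        rw [interior_Icc]
        exact (hd.inv hne).add ((hasDerivWithinAt_id t _).div_const h)
      · intro t ht
        rw [interior_Icc] at ht
        have ht' : t ∈ Set.Icc a c := Set.Ioo_subset_Icc_self ht
        have hne : y t ≠ 0 := (hylt t (hIcc ht')).ne
        have htpos : t ∈ Set.Ioc (0:ℝ) M := ⟨lt_of_lt_of_le hr₀ (hIccM ht').1, (hIccM ht').2⟩
        have hψnn : 0 ≤ ψ t := (hψb t htpos).1
        have hy2 : 0 < y t ^ 2 := by positivity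
        have : -((y t ^ 2 - ψ t) / h) / y t ^ 2 + 1 / h = ψ t / (h * y t ^ 2) := by
          field_simp
          ring
        rw [this]
        positivity
    have := hmono (Set.left_mem_Icc.mpr hc.1) (Set.right_mem_Icc.mpr hc.1) hc.1
    simpa using this
  -- derive bound y c ≤ K⁻¹
  set K : ℝ := (y a)⁻¹ + (a - b) / h with hK
  have hKneg : K < 0 := by
    have h1 : (y a)⁻¹ < 0 := inv_lt_zero.mpr hneg
    have h2 : (a - b) / h ≤ 0 := div_nonpos_iff.mpr (Or.inr ⟨by linarith, hh.le⟩)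
    rw [hK]
    linarith
  have hbound : ∀ c ∈ Set.Ico a b, y c ≤ K⁻¹ := by
    intro c hc
    have hycneg : y c < 0 := hylt c hc
    have hinv : (y c)⁻¹ < 0 := inv_lt_zero.mpr hycneg
    have h1 : K ≤ (y c)⁻¹ := by
      have hkey := key c hc
      have hcb : c / h ≤ b / h := (div_le_div_iff_of_pos_right hh).mpr hc.2.le
      rw [hK, sub_div]
      linarith
    have := (inv_le_inv_of_neg hinv hKneg).mpr h1
    rwa [inv_inv] at this
  have hbIcc : b ∈ Set.Icc r₀ M := hsub ⟨hab, hbM⟩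
  have htend : Filter.Tendsto y (nhdsWithin b (Set.Ico a b)) (nhds (y b)) :=
    (hyc b hbIcc).mono (fun t ht => hsub ⟨ht.1, le_trans ht.2.le hbM⟩)
  have hne : (nhdsWithin b (Set.Ico a b)).NeBot := by
    rw [nhdsWithin_Ico_eq_nhdsLT hab']
    infer_instance
  have hfin : y b ≤ K⁻¹ :=
    le_of_tendsto htend (Filter.eventually_of_mem self_mem_nhdsWithin hbound)
  have : K⁻¹ < 0 := inv_lt_zero.mpr hKneg
  rw [hyb] at hfin
  linarith
end

section
/- Let f : I → ℝ be continuous and of locally bounded variation on an open interval I. Then, as measures on any bounded Borel subset of I, d(e^f) = e^f df. -/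
open MeasureTheory
open Set
open scoped ENNReal


lemma aux_abs_exp_sub_exp_le {u v M : ℝ} (hu : u ≤ M) (hv : v ≤ M) :
    |Real.exp u - Real.exp v| ≤ Real.exp M * |u - v| := by
  wlog h : v ≤ u generalizing u v
  · rw [abs_sub_comm, abs_sub_comm u v]; exact this hv hu (le_of_not_ge h)
  rw [abs_of_nonneg (sub_nonneg.2 (Real.exp_le_exp.2 h)), abs_of_nonneg (sub_nonneg.2 h)]
  have h2 := Real.add_one_le_exp (v - u)
  have h3 : Real.exp u * (v - u + 1) ≤ Real.exp u * Real.exp (v - u) :=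
    mul_le_mul_of_nonneg_left h2 (Real.exp_pos u).le
  rw [← Real.exp_add, show u + (v - u) = v by ring] at h3
  have h4 : Real.exp u ≤ Real.exp M := Real.exp_le_exp.2 hu
  nlinarith [sub_nonneg.2 h, Real.exp_pos u]

lemma aux_exp_taylor {u v : ℝ} (h1 : |v - u| ≤ 1) :
    |Real.exp v - Real.exp u - Real.exp u * (v - u)| ≤ Real.exp u * (v - u) ^ 2 := by
  have h2 := Real.abs_exp_sub_one_sub_id_le h1
  have h3 : Real.exp v - Real.exp u - Real.exp u * (v - u)
      = Real.exp u * (Real.exp (v - u) - 1 - (v - u)) := by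
    have : Real.exp u * Real.exp (v - u) = Real.exp v := by
      rw [← Real.exp_add, show u + (v - u) = v by ring]
    nlinarith [this]
  rw [h3, abs_mul, abs_of_pos (Real.exp_pos u)]
  exact mul_le_mul_of_nonneg_left h2 (Real.exp_pos u).le

set_option maxHeartbeats 1000000 in
lemma aux_key_interval (a b : ℝ) (f : ℝ → ℝ)
    (hf_cont : ContinuousOn f (Set.Icc a b))
    (hf_bv : BoundedVariationOn f (Set.Icc a b))
    (μp μm : Measure ℝ) [IsFiniteMeasure μp] [IsFiniteMeasure μm]
    (spec : ∀ c d : ℝ, a ≤ c → c ≤ d → d ≤ b →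
      (μp (Set.Ioc c d)).toReal - (μm (Set.Ioc c d)).toReal = f d - f c)
    {c d : ℝ} (hac : a ≤ c) (hcd : c ≤ d) (hdb : d ≤ b) :
    (∫ x in Set.Ioc c d, Real.exp (f x) ∂μp) - ∫ x in Set.Ioc c d, Real.exp (f x) ∂μm
      = Real.exp (f d) - Real.exp (f c) := by
  rcases eq_or_lt_of_le hcd with rfl | hcd'
  · simp
  have hab : a ≤ b := le_trans hac (le_trans hcd hdb)
  set g : ℝ → ℝ := fun x => Real.exp (f x) with hg
  have hg_cont : ContinuousOn g (Icc a b) := Real.continuous_exp.comp_continuousOn hf_cont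
  obtain ⟨M, hM⟩ := (isCompact_Icc (a := a) (b := b)).exists_bound_of_continuousOn hf_cont
  have hM0 : 0 ≤ M := le_trans (norm_nonneg _) (hM a (left_mem_Icc.2 hab))
  set C := Real.exp M with hC
  have hC0 : 0 < C := Real.exp_pos M
  have hfM : ∀ x ∈ Icc a b, f x ≤ M := fun x hx => (abs_le.1 (hM x hx)).2
  have hgC : ∀ x ∈ Icc a b, g x ≤ C := fun x hx => Real.exp_le_exp.2 (hfM x hx)
  have hint : ∀ (μ : Measure ℝ), IsFiniteMeasure μ → IntegrableOn g (Icc a b) μ := by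
    intro μ hμ
    refine ⟨hg_cont.aestronglyMeasurable measurableSet_Icc, ?_⟩
    refine HasFiniteIntegral.of_bounded (C := C) ?_
    filter_upwards [ae_restrict_mem measurableSet_Icc] with x hx
    rw [Real.norm_eq_abs, abs_of_pos (Real.exp_pos _)]
    exact hgC x hx
  have hintp := hint μp ‹_›
  have hintm := hint μm ‹_›
  set V := (eVariationOn f (Icc a b)).toReal with hV
  have hV0 : 0 ≤ V := ENNReal.toReal_nonneg
  refine eq_of_forall_dist_le fun ε hε => ?_
  set K := C * ((μp Set.univ).toReal + (μm Set.univ).toReal + V) + 1 with hK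
  have hK0 : 0 < K := by positivity
  set δ := min 1 (ε / K) with hδ
  have hδ0 : 0 < δ := lt_min one_pos (div_pos hε hK0)
  have hδ1 : δ ≤ 1 := min_le_left _ _
  have huc : UniformContinuousOn f (Icc a b) :=
    isCompact_Icc.uniformContinuousOn_of_continuous hf_cont
  rw [Metric.uniformContinuousOn_iff_le] at huc
  obtain ⟨δ', hδ'0, hδ'⟩ := huc δ hδ0
  obtain ⟨n, hn⟩ := exists_nat_gt ((d - c) / δ')
  have hdc0 : 0 < d - c := sub_pos.2 hcd'
  have hn0 : 0 < n := by
    rcases Nat.eq_zero_or_pos n with h0 | h0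
    · exfalso; rw [h0] at hn; push_cast at hn
      have := div_pos hdc0 hδ'0; linarith
    · exact h0
  have hn0' : (0:ℝ) < n := by exact_mod_cast hn0
  have hmesh : (d - c) / n ≤ δ' := by
    rw [div_le_iff₀ hn0']
    have := (div_lt_iff₀ hδ'0).1 hn
    nlinarith
  set h : ℝ := (d - c) / n with hh
  have hh0 : 0 < h := div_pos hdc0 hn0'
  set t : ℕ → ℝ := fun i => c + i * h with ht
  have ht0 : t 0 = c := by simp [ht]
  have htn : t n = d := by
    simp only [ht, hh]; field_simp; ring
  have htmono : Monotone t := fun i j hij => by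
    simp only [ht]
    have : (i:ℝ) ≤ j := Nat.cast_le.2 hij
    nlinarith
  have htstep : ∀ i, t (i+1) - t i = h := fun i => by simp only [ht]; push_cast; ring
  have htmem : ∀ i ≤ n, t i ∈ Icc a b := by
    intro i hi
    constructor
    · have : c ≤ t i := by
        simp only [ht]; have : (0:ℝ) ≤ i := Nat.cast_nonneg i; nlinarith
      linarith
    · have h1 : t i ≤ t n := htmono hi
      rw [htn] at h1; linarith
  have hosc : ∀ x ∈ Icc a b, ∀ y ∈ Icc a b, |x - y| ≤ δ' → |f x - f y| ≤ δ := by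
    intro x hx y hy hxy
    have := hδ' x hx y hy (by rwa [Real.dist_eq])
    rwa [Real.dist_eq] at this
  have hIsub : ∀ i < n, Ioc (t i) (t (i+1)) ⊆ Icc a b := fun i hi =>
    subset_trans Ioc_subset_Icc_self (Icc_subset_Icc (htmem i hi.le).1 (htmem (i+1) hi).2)
  have hii : ∀ (μ : Measure ℝ), IntegrableOn g (Icc a b) μ →
      ∀ k < n, IntervalIntegrable g μ (t k) (t (k+1)) := by
    intro μ hμ k hk
    refine (hμ.mono_set ?_).intervalIntegrable
    rw [uIcc_of_le (htmono (Nat.le_succ k))]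
    exact Icc_subset_Icc (htmem k hk.le).1 (htmem (k+1) hk).2
  have hsum : ∀ (μ : Measure ℝ), IntegrableOn g (Icc a b) μ →
      ∑ i ∈ Finset.range n, ∫ x in Ioc (t i) (t (i+1)), g x ∂μ = ∫ x in Ioc c d, g x ∂μ := by
    intro μ hμ
    have h1 := intervalIntegral.sum_integral_adjacent_intervals (f := g) (μ := μ) (a := t)
      (hii μ hμ)
    calc ∑ i ∈ Finset.range n, ∫ x in Ioc (t i) (t (i+1)), g x ∂μ
        = ∑ i ∈ Finset.range n, ∫ x in (t i)..(t (i+1)), g x ∂μ := by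
          refine Finset.sum_congr rfl fun i _ => ?_
          rw [intervalIntegral.integral_of_le (htmono (Nat.le_succ i))]
      _ = ∫ x in (t 0)..(t n), g x ∂μ := h1
      _ = _ := by rw [ht0, htn, intervalIntegral.integral_of_le hcd]
  have hmeas_sum : ∀ (μ : Measure ℝ), IsFiniteMeasure μ →
      ∑ i ∈ Finset.range n, (μ (Ioc (t i) (t (i+1)))).toReal = (μ (Ioc c d)).toReal := by
    intro μ hμ
    have key : ∀ k, k ≤ n → ∑ i ∈ Finset.range k, μ (Ioc (t i) (t (i+1))) = μ (Ioc c (t k)) := by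
      intro k
      induction k with
      | zero => intro _; simp [ht0]
      | succ k ih =>
        intro hk
        rw [Finset.sum_range_succ, ih (Nat.le_of_succ_le hk)]
        have h1 : c ≤ t k := ht0 ▸ htmono (Nat.zero_le k)
        have h2 : t k ≤ t (k+1) := htmono (Nat.le_succ k)
        rw [← measure_union (Set.Ioc_disjoint_Ioc_of_le le_rfl) measurableSet_Ioc,
          Set.Ioc_union_Ioc_eq_Ioc h1 h2]
      
    have h2 := key n le_rfl
    rw [htn] at h2
    rw [← h2, ENNReal.toReal_sum (fun i _ => measure_ne_top μ _)]
  have hΔ : ∀ i < n, |f (t (i+1)) - f (t i)| ≤ δ := by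
    intro i hi
    refine hosc _ (htmem _ hi) _ (htmem _ hi.le) ?_
    rw [htstep i, abs_of_pos hh0]
    exact hmesh
  have hA : ∀ (μ : Measure ℝ), IsFiniteMeasure μ → IntegrableOn g (Icc a b) μ → ∀ i < n,
      |(∫ x in Ioc (t i) (t (i+1)), g x ∂μ) - g (t i) * (μ (Ioc (t i) (t (i+1)))).toReal|
        ≤ C * δ * (μ (Ioc (t i) (t (i+1)))).toReal := by
    intro μ hfin μint i hi
    have hconst : ∫ x in Ioc (t i) (t (i+1)), g (t i) ∂μ
        = g (t i) * (μ (Ioc (t i) (t (i+1)))).toReal := by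
      rw [setIntegral_const, smul_eq_mul, mul_comm]; rfl
    rw [← hconst, ← integral_sub (μint.mono_set (hIsub i hi))
      (integrableOn_const (measure_ne_top _ _))]
    rw [← Real.norm_eq_abs]
    refine norm_setIntegral_le_of_norm_le_const (measure_lt_top _ _) ?_
    intro x hx
    rw [Real.norm_eq_abs]
    have hxmem : x ∈ Icc a b := hIsub i hi hx
    have hdist : |x - t i| ≤ δ' := by
      rw [abs_of_pos (sub_pos.2 hx.1)]
      have := hx.2
      have := htstep i
      nlinarith [hmesh]
    have h1 : |f x - f (t i)| ≤ δ := hosc _ hxmem _ (htmem i hi.le) hdist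
    calc |g x - g (t i)| ≤ C * |f x - f (t i)| :=
          aux_abs_exp_sub_exp_le (hfM x hxmem) (hfM _ (htmem i hi.le))
      _ ≤ C * δ := mul_le_mul_of_nonneg_left h1 hC0.le
  have hB : ∀ i < n, |g (t i) * (f (t (i+1)) - f (t i)) - (g (t (i+1)) - g (t i))|
      ≤ C * δ * |f (t (i+1)) - f (t i)| := by
    intro i hi
    have h1 : |f (t (i+1)) - f (t i)| ≤ δ := hΔ i hi
    have h2 := aux_exp_taylor (u := f (t i)) (v := f (t (i+1))) (le_trans h1 hδ1)
    have h3 : g (t i) * (f (t (i+1)) - f (t i)) - (g (t (i+1)) - g (t i))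
        = -(Real.exp (f (t (i+1))) - Real.exp (f (t i))
            - Real.exp (f (t i)) * (f (t (i+1)) - f (t i))) := by
      simp only [hg]; ring
    rw [h3, abs_neg]
    have h4 : Real.exp (f (t i)) ≤ C := hgC _ (htmem i hi.le)
    calc _ ≤ Real.exp (f (t i)) * (f (t (i+1)) - f (t i)) ^ 2 := h2
      _ ≤ C * δ * |f (t (i+1)) - f (t i)| := by
          have h5 : Real.exp (f (t i)) * |f (t (i+1)) - f (t i)| ≤ C * δ :=
            mul_le_mul h4 h1 (abs_nonneg _) hC0.le
          nlinarith [sq_abs (f (t (i+1)) - f (t i)), abs_nonneg (f (t (i+1)) - f (t i)),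
            Real.exp_pos (f (t i))]
  have hVar : ∑ i ∈ Finset.range n, |f (t (i+1)) - f (t i)| ≤ V := by
    set u : ℕ → ℝ := fun i => t (min i n) with hu
    have humono : Monotone u := fun i j hij => htmono (min_le_min hij le_rfl)
    have humem : ∀ i, u i ∈ Icc a b := fun i => htmem _ (min_le_right _ _)
    have hsum2 := eVariationOn.sum_le (f := f) (n := n) humono humem
    have heq : ∀ i ∈ Finset.range n, edist (f (u (i+1))) (f (u i))
        = ENNReal.ofReal |f (t (i+1)) - f (t i)| := by
      intro i hi
      rw [Finset.mem_range] at hi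
      have h1 : u i = t i := by simp only [hu]; rw [min_eq_left hi.le]
      have h2 : u (i+1) = t (i+1) := by simp only [hu]; rw [min_eq_left hi]
      rw [h1, h2, edist_dist, Real.dist_eq]
    rw [Finset.sum_congr rfl heq] at hsum2
    have h5 : (∑ i ∈ Finset.range n, ENNReal.ofReal |f (t (i+1)) - f (t i)|).toReal
        = ∑ i ∈ Finset.range n, |f (t (i+1)) - f (t i)| := by
      rw [ENNReal.toReal_sum (fun i _ => ENNReal.ofReal_ne_top)]
      exact Finset.sum_congr rfl fun i _ => ENNReal.toReal_ofReal (abs_nonneg _)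
    rw [← h5]
    exact ENNReal.toReal_mono hf_bv hsum2
  -- assemble
  rw [Real.dist_eq]
  have hL : (∫ x in Ioc c d, g x ∂μp) - (∫ x in Ioc c d, g x ∂μm)
      - (Real.exp (f d) - Real.exp (f c))
      = ∑ i ∈ Finset.range n,
          (((∫ x in Ioc (t i) (t (i+1)), g x ∂μp) - g (t i) * (μp (Ioc (t i) (t (i+1)))).toReal)
          - ((∫ x in Ioc (t i) (t (i+1)), g x ∂μm) - g (t i) * (μm (Ioc (t i) (t (i+1)))).toReal)
          + (g (t i) * (f (t (i+1)) - f (t i)) - (g (t (i+1)) - g (t i)))) := by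
    have e1 := hsum μp hintp
    have e2 := hsum μm hintm
    have e3 : ∑ i ∈ Finset.range n, (g (t (i+1)) - g (t i)) = g (t n) - g (t 0) :=
      Finset.sum_range_sub (fun i => g (t i)) n
    rw [← e1, ← e2, show Real.exp (f d) - Real.exp (f c)
      = ∑ i ∈ Finset.range n, (g (t (i+1)) - g (t i)) by rw [e3, ht0, htn]]
    rw [← Finset.sum_sub_distrib, ← Finset.sum_sub_distrib]
    refine Finset.sum_congr rfl fun i hi => ?_
    rw [Finset.mem_range] at hi
    have hs := spec (t i) (t (i+1)) (htmem i hi.le).1 (htmono (Nat.le_succ i)) (htmem (i+1) hi).2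
    have : g (t i) * (f (t (i+1)) - f (t i))
        = g (t i) * ((μp (Ioc (t i) (t (i+1)))).toReal - (μm (Ioc (t i) (t (i+1)))).toReal) := by
      rw [hs]
    linarith [this]
  rw [hL]
  calc |∑ i ∈ Finset.range n, _| ≤ ∑ i ∈ Finset.range n,
        (C * δ * (μp (Ioc (t i) (t (i+1)))).toReal + C * δ * (μm (Ioc (t i) (t (i+1)))).toReal
          + C * δ * |f (t (i+1)) - f (t i)|) := by
        refine le_trans (Finset.abs_sum_le_sum_abs _ _) (Finset.sum_le_sum fun i hi => ?_)
        rw [Finset.mem_range] at hi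
        have a1 := hA μp ‹_› hintp i hi
        have a2 := hA μm ‹_› hintm i hi
        have b1 := hB i hi
        set X := (∫ x in Ioc (t i) (t (i+1)), g x ∂μp) - g (t i) * (μp (Ioc (t i) (t (i+1)))).toReal
        set Y := (∫ x in Ioc (t i) (t (i+1)), g x ∂μm) - g (t i) * (μm (Ioc (t i) (t (i+1)))).toReal
        set Z := g (t i) * (f (t (i+1)) - f (t i)) - (g (t (i+1)) - g (t i))
        calc |X - Y + Z| ≤ |X - Y| + |Z| := abs_add_le _ _
          _ ≤ |X| + |Y| + |Z| := by linarith [abs_sub X Y]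
          _ ≤ _ := by linarith
    _ = C * δ * ((μp (Ioc c d)).toReal + (μm (Ioc c d)).toReal
          + ∑ i ∈ Finset.range n, |f (t (i+1)) - f (t i)|) := by
        rw [Finset.sum_add_distrib, Finset.sum_add_distrib, ← Finset.mul_sum, ← Finset.mul_sum,
          ← Finset.mul_sum, hmeas_sum μp ‹_›, hmeas_sum μm ‹_›]
        ring
    _ ≤ δ * K := by
        have m1 : (μp (Ioc c d)).toReal ≤ (μp Set.univ).toReal :=
          ENNReal.toReal_mono (measure_ne_top _ _) (measure_mono (subset_univ _))
        have m2 : (μm (Ioc c d)).toReal ≤ (μm Set.univ).toReal :=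
          ENNReal.toReal_mono (measure_ne_top _ _) (measure_mono (subset_univ _))
        have h7 : (μp (Ioc c d)).toReal + (μm (Ioc c d)).toReal
            + ∑ i ∈ Finset.range n, |f (t (i+1)) - f (t i)|
            ≤ (μp Set.univ).toReal + (μm Set.univ).toReal + V := by linarith [hVar]
        calc C * δ * ((μp (Ioc c d)).toReal + (μm (Ioc c d)).toReal
              + ∑ i ∈ Finset.range n, |f (t (i+1)) - f (t i)|)
            ≤ C * δ * ((μp Set.univ).toReal + (μm Set.univ).toReal + V) :=
              mul_le_mul_of_nonneg_left h7 (by positivity)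
          _ = δ * (C * ((μp Set.univ).toReal + (μm Set.univ).toReal + V)) := by ring
          _ ≤ δ * K := mul_le_mul_of_nonneg_left (by rw [hK]; linarith) hδ0.le
    _ ≤ ε := by
        have h6 : δ ≤ ε / K := min_le_right _ _
        calc δ * K ≤ (ε / K) * K := mul_le_mul_of_nonneg_right h6 hK0.le
          _ = ε := div_mul_cancel₀ ε hK0.ne'

/-- Data representing the Lebesgue–Stieltjes signed measure `df` of a real function
of bounded variation on `(a, b]`: two finite nonnegative measures whose difference
has the increments of `f`. -/
structure RealStieltjesMeasureData (f : ℝ → ℝ) (a b : ℝ) where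
  μp : Measure ℝ
  μm : Measure ℝ
  finp : IsFiniteMeasure μp
  finm : IsFiniteMeasure μm
  spec : ∀ c d : ℝ, a ≤ c → c ≤ d → d ≤ b →
    (μp (Set.Ioc c d)).toReal - (μm (Set.Ioc c d)).toReal = f d - f c

set_option maxHeartbeats 1000000 in
/-- **Chain rule for continuous functions of bounded variation**: as measures on
any bounded Borel subset of the interval, `d(e^f) = e^f df`. -/
theorem bv_chain_rule_exp (a b : ℝ) (hab : a < b) (f : ℝ → ℝ)
    (hf_cont : ContinuousOn f (Set.Icc a b))
    (hf_bv : BoundedVariationOn f (Set.Icc a b))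
    (Df : RealStieltjesMeasureData f a b)
    (De : RealStieltjesMeasureData (fun x => Real.exp (f x)) a b)
    (E : Set ℝ) (hE : MeasurableSet E) (hEsub : E ⊆ Set.Ioc a b) :
    (De.μp E).toReal - (De.μm E).toReal
      = (∫ x in E, Real.exp (f x) ∂Df.μp) - ∫ x in E, Real.exp (f x) ∂Df.μm := by
  haveI := Df.finp; haveI := Df.finm; haveI := De.finp; haveI := De.finm
  have hg_cont : ContinuousOn (fun x => Real.exp (f x)) (Icc a b) := Real.continuous_exp.comp_continuousOn hf_cont
  obtain ⟨M, hM⟩ := (isCompact_Icc (a := a) (b := b)).exists_bound_of_continuousOn hf_cont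
  set C := Real.exp M with hC
  have hgC : ∀ x ∈ Icc a b, Real.exp (f x) ≤ C := fun x hx =>
    Real.exp_le_exp.2 ((abs_le.1 (hM x hx)).2)
  set gE : ℝ → ℝ≥0∞ := fun x => ENNReal.ofReal (Real.exp (f x)) with hgE
  have hfin : ∀ (μ : Measure ℝ), IsFiniteMeasure μ → ∀ S : Set ℝ, S ⊆ Ioc a b →
      MeasurableSet S → ∫⁻ x in S, gE x ∂μ ≠ ⊤ := by
    intro μ hμ S hSsub hS
    have h1 : ∫⁻ x in S, gE x ∂μ ≤ ∫⁻ _x in S, ENNReal.ofReal C ∂μ := by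
      refine lintegral_mono_ae ?_
      filter_upwards [ae_restrict_mem hS] with x hx
      exact ENNReal.ofReal_le_ofReal (hgC x (Ioc_subset_Icc_self (hSsub hx)))
    refine ne_of_lt (lt_of_le_of_lt h1 ?_)
    rw [setLIntegral_const]
    exact ENNReal.mul_lt_top ENNReal.ofReal_lt_top (measure_lt_top μ S)
  have hIR : ∀ (μ : Measure ℝ), IsFiniteMeasure μ → ∀ S : Set ℝ, S ⊆ Ioc a b →
      MeasurableSet S → ∫ x in S, Real.exp (f x) ∂μ = (∫⁻ x in S, gE x ∂μ).toReal := by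
    intro μ hμ S hSsub hS
    rw [integral_eq_lintegral_of_nonneg_ae
      (Filter.Eventually.of_forall (fun x => (Real.exp_pos (f x)).le))
      ((hg_cont.aestronglyMeasurable measurableSet_Icc).mono_measure
        (Measure.restrict_mono (subset_trans hSsub Ioc_subset_Icc_self) le_rfl))]
  set ρp : Measure ℝ := (Df.μp.restrict (Ioc a b)).withDensity gE with hρp
  set ρm : Measure ℝ := (Df.μm.restrict (Ioc a b)).withDensity gE with hρm
  have hρ : ∀ (μ : Measure ℝ) (S : Set ℝ), MeasurableSet S → S ⊆ Ioc a b →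
      ((μ.restrict (Ioc a b)).withDensity gE) S = ∫⁻ x in S, gE x ∂μ := by
    intro μ S hS hSsub
    rw [withDensity_apply _ hS, Measure.restrict_restrict hS,
      inter_eq_self_of_subset_left hSsub]
  haveI : IsFiniteMeasure ρp :=
    isFiniteMeasure_withDensity (hfin Df.μp ‹_› (Ioc a b) subset_rfl measurableSet_Ioc)
  haveI : IsFiniteMeasure ρm :=
    isFiniteMeasure_withDensity (hfin Df.μm ‹_› (Ioc a b) subset_rfl measurableSet_Ioc)
  -- key claim on good intervals
  have claim : ∀ c d : ℝ, a ≤ c → c ≤ d → d ≤ b →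
      De.μp (Ioc c d) + ∫⁻ x in Ioc c d, gE x ∂Df.μm
        = De.μm (Ioc c d) + ∫⁻ x in Ioc c d, gE x ∂Df.μp := by
    intro c d hac hcd hdb
    have hsub : Ioc c d ⊆ Ioc a b := Ioc_subset_Ioc hac hdb
    have f1 := hfin Df.μm ‹_› _ hsub measurableSet_Ioc
    have f2 := hfin Df.μp ‹_› _ hsub measurableSet_Ioc
    refine (ENNReal.toReal_eq_toReal_iff' (ENNReal.add_ne_top.2 ⟨measure_ne_top _ _, f1⟩)
      (ENNReal.add_ne_top.2 ⟨measure_ne_top _ _, f2⟩)).1 ?_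
    rw [ENNReal.toReal_add (measure_ne_top _ _) f1, ENNReal.toReal_add (measure_ne_top _ _) f2,
      ← hIR Df.μm ‹_› _ hsub measurableSet_Ioc, ← hIR Df.μp ‹_› _ hsub measurableSet_Ioc]
    have h1 := De.spec c d hac hcd hdb
    have h2 := aux_key_interval a b f hf_cont hf_bv Df.μp Df.μm Df.spec hac hcd hdb
    linarith
  have hext : De.μp.restrict (Ioc a b) + ρm = De.μm.restrict (Ioc a b) + ρp := by
    have main : ∀ c d : ℝ,
        (De.μp.restrict (Ioc a b) + ρm) (Ioc c d) = (De.μm.restrict (Ioc a b) + ρp) (Ioc c d) := by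
      intro c d
      rw [Measure.add_apply, Measure.add_apply,
        Measure.restrict_apply measurableSet_Ioc, Measure.restrict_apply measurableSet_Ioc]
      have hint : Ioc c d ∩ Ioc a b = Ioc (max c a) (min d b) := Set.Ioc_inter_Ioc
      have hρm' : ρm (Ioc c d) = ∫⁻ x in Ioc (max c a) (min d b), gE x ∂Df.μm := by
        rw [hρm, withDensity_apply _ measurableSet_Ioc,
          Measure.restrict_restrict measurableSet_Ioc, hint]
      have hρp' : ρp (Ioc c d) = ∫⁻ x in Ioc (max c a) (min d b), gE x ∂Df.μp := by
        rw [hρp, withDensity_apply _ measurableSet_Ioc,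
          Measure.restrict_restrict measurableSet_Ioc, hint]
      rw [hint, hρm', hρp']
      rcases le_or_gt (max c a) (min d b) with hle | hlt
      · exact claim (max c a) (min d b) (le_max_right c a) hle (min_le_right d b)
      · rw [Set.Ioc_eq_empty (by exact not_lt.2 hlt.le)]
        simp
    have hnull : ∀ (ν : Measure ℝ) (ξ : Measure ℝ),
        (ν.restrict (Ioc a b) + (ξ.restrict (Ioc a b)).withDensity gE) (Ioc a b)ᶜ = 0 := by
      intro ν ξ
      rw [Measure.add_apply, Measure.restrict_apply measurableSet_Ioc.compl, compl_inter_self,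
        measure_empty, withDensity_apply _ measurableSet_Ioc.compl,
        Measure.restrict_restrict measurableSet_Ioc.compl, compl_inter_self,
        Measure.restrict_empty, lintegral_zero_measure, add_zero]
    refine Measure.ext_of_Ioc_finite _ _ ?_ (fun c d _ => main c d)
    calc (De.μp.restrict (Ioc a b) + ρm) univ
        = (De.μp.restrict (Ioc a b) + ρm) (Ioc a b)
          + (De.μp.restrict (Ioc a b) + ρm) (Ioc a b)ᶜ :=
          (measure_add_measure_compl measurableSet_Ioc).symm
      _ = (De.μp.restrict (Ioc a b) + ρm) (Ioc a b) := by rw [hρm, hnull, add_zero]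
      _ = (De.μm.restrict (Ioc a b) + ρp) (Ioc a b) := main a b
      _ = (De.μm.restrict (Ioc a b) + ρp) (Ioc a b)
          + (De.μm.restrict (Ioc a b) + ρp) (Ioc a b)ᶜ := by rw [hρp, hnull, add_zero]
      _ = (De.μm.restrict (Ioc a b) + ρp) univ :=
          measure_add_measure_compl measurableSet_Ioc
  -- conclude
  have hEval := congrArg (fun μ : Measure ℝ => μ E) hext
  simp only [Measure.add_apply] at hEval
  rw [Measure.restrict_apply hE, Measure.restrict_apply hE,
    inter_eq_self_of_subset_left hEsub] at hEval
  rw [hρm, hρp, hρ Df.μm E hE hEsub, hρ Df.μp E hE hEsub] at hEval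
  have f1 := hfin Df.μm ‹_› E hEsub hE
  have f2 := hfin Df.μp ‹_› E hEsub hE
  have hreal := congrArg ENNReal.toReal hEval
  rw [ENNReal.toReal_add (measure_ne_top _ _) f1,
    ENNReal.toReal_add (measure_ne_top _ _) f2] at hreal
  rw [hIR Df.μp ‹_› E hEsub hE, hIR Df.μm ‹_› E hEsub hE]
  linarith
end
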